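/- arXiv:alg-geom/9608029 — 3 statements merged into one kernel-verified Lean document; each statement's English description precedes it below -/
import Mathlib

section
/- Let g be a rational function of one complex variable whose only pole is at 0 and such that |g(Y)| = O(|Y|^{-2}) as |Y| → ∞, let 0 ≤ γ < 1, and set f(Y) = g(Y) e^{-γ Y}. Then the sum Σ_{l ∈ ℤ, l ≠ 0} f(2πi l) converges and equals Res_{Y=0} ( f(Y) / (e^{-Y} - 1) ). -/
open Real

noncomputable def stmt3_bb (γ : ℝ) (m : ℕ) : ℂ :=
  (-1) ^ (m + 1) * (bernoulliFun m γ : ℂ) / m.factorial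

lemma stmt3_hurwitz {γ : ℝ} (hγ0 : 0 ≤ γ) (hγ1 : γ < 1) {m : ℕ} (hm : 2 ≤ m) :
    HasSum (fun l : ℤ => 1 / (l : ℂ) ^ m *
        Complex.exp (-(γ : ℂ) * (2 * (π : ℂ) * Complex.I * (l : ℂ))))
      ((2 * (π : ℂ) * Complex.I) ^ m * stmt3_bb γ m) := by
  have hx : γ ∈ Set.Icc (0:ℝ) 1 := ⟨hγ0, hγ1.le⟩
  have h := hasSum_one_div_pow_mul_fourier_mul_bernoulliFun hm hx
  have h2 := (Equiv.neg ℤ).hasSum_iff.mpr h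
  have h3 := h2.mul_left ((-1 : ℂ) ^ m)
  convert h3 using 1
  · rfl
  · funext l
    simp only [Function.comp_apply, Equiv.neg_apply, fourier_coe_apply]
    have h4 : ((-l : ℤ) : ℂ) = -(l : ℂ) := by push_cast; ring
    rw [h4, neg_pow (l : ℂ) m]
    have hexp : (2 * (π:ℂ) * Complex.I * (-(l:ℂ)) * (γ:ℂ) / ((1:ℝ):ℂ))
        = -(γ : ℂ) * (2 * (π : ℂ) * Complex.I * (l : ℂ)) := by
      push_cast; ring
    rw [hexp]
    rcases eq_or_ne (l : ℂ) 0 with h0 | h0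
    · rw [h0]; simp [zero_pow (by omega : m ≠ 0)]
    · have hne : (l:ℂ)^m ≠ 0 := pow_ne_zero _ h0
      have hsgn : ((-1 : ℂ))^m ≠ 0 := pow_ne_zero _ (by norm_num)
      field_simp
  · simp only [stmt3_bb, pow_succ]
    ring

noncomputable def stmt3_K : ℝ := ∑' l : ℤ, ‖1 / ((l:ℂ)) ^ 2‖

lemma stmt3_summable_K : Summable (fun l : ℤ => ‖1 / ((l:ℂ)) ^ 2‖) := by
  apply Summable.congr (Real.summable_one_div_int_pow.mpr (by norm_num : 1 < 2))
  intro l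
  rw [norm_div, norm_one, norm_pow, Complex.norm_intCast]
  rw [← abs_pow, abs_of_nonneg (by positivity)]

lemma stmt3_exp_norm (γ : ℝ) (l : ℤ) :
    ‖Complex.exp (-(γ : ℂ) * (2 * (π : ℂ) * Complex.I * (l : ℂ)))‖ = 1 := by
  have h : -(γ : ℂ) * (2 * (π : ℂ) * Complex.I * (l : ℂ))
      = ((-(γ * (2 * π * l)) : ℝ) : ℂ) * Complex.I := by push_cast; ring
  rw [h]
  exact Complex.norm_exp_ofReal_mul_I _

lemma stmt3_term_norm_le (γ : ℝ) {m : ℕ} (hm : 2 ≤ m) (l : ℤ) :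
    ‖1 / (l : ℂ) ^ m * Complex.exp (-(γ : ℂ) * (2 * (π : ℂ) * Complex.I * (l : ℂ)))‖
      ≤ ‖1 / ((l:ℂ)) ^ 2‖ := by
  rw [norm_mul, stmt3_exp_norm, mul_one, norm_div, norm_div, norm_one, norm_pow, norm_pow]
  rcases eq_or_ne l 0 with rfl | h0
  · simp [zero_pow (by omega : m ≠ 0)]
  · have h1 : (1:ℝ) ≤ ‖(l:ℂ)‖ := by
      rw [Complex.norm_intCast]
      exact_mod_cast Int.one_le_abs h0
    apply one_div_le_one_div_of_le (by positivity)
    exact pow_le_pow_right₀ h1 hm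

lemma stmt3_bb_le {γ : ℝ} (hγ0 : 0 ≤ γ) (hγ1 : γ < 1) {m : ℕ} (hm : 2 ≤ m) :
    ‖stmt3_bb γ m‖ ≤ stmt3_K / (2*π) ^ m := by
  have h := stmt3_hurwitz hγ0 hγ1 hm
  have hs : Summable (fun l : ℤ => ‖1 / (l : ℂ) ^ m *
      Complex.exp (-(γ : ℂ) * (2 * (π : ℂ) * Complex.I * (l : ℂ)))‖) :=
    Summable.of_nonneg_of_le (fun _ => norm_nonneg _) (stmt3_term_norm_le γ hm)
      stmt3_summable_K
  have h1 : ‖(2 * (π : ℂ) * Complex.I) ^ m * stmt3_bb γ m‖ ≤ stmt3_K := by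
    rw [← h.tsum_eq]
    refine (norm_tsum_le_tsum_norm hs).trans ?_
    exact Summable.tsum_le_tsum (stmt3_term_norm_le γ hm) hs stmt3_summable_K
  have h2 : ‖(2 * (π : ℂ) * Complex.I) ^ m‖ = (2*π) ^ m := by
    rw [norm_pow]
    congr 1
    simp [norm_mul, Complex.norm_I, Complex.norm_real, abs_of_nonneg Real.pi_pos.le,
      Complex.norm_ofNat]
  rw [norm_mul, h2] at h1
  rw [le_div_iff₀ (by positivity)]
  linarith [h1]

noncomputable def stmt3_ee (j : ℕ) : ℂ :=
  if j = 0 then 0 else (-1) ^ j / j.factorial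

noncomputable def stmt3_dd (γ : ℝ) (n : ℕ) : ℂ :=
  if n = 0 then 0 else (-(γ:ℂ)) ^ (n-1) / (n-1).factorial

lemma stmt3_bernoulliFun_eq (γ : ℝ) (i : ℕ) :
    ((bernoulliFun i γ : ℝ) : ℂ) = Polynomial.aeval ((γ : ℝ) : ℂ) (Polynomial.bernoulli i) := by
  rw [show ((γ:ℝ):ℂ) = algebraMap ℝ ℂ γ from rfl,
    Polynomial.aeval_algebraMap_apply ℂ γ (Polynomial.bernoulli i)]
  rw [show (algebraMap ℝ ℂ) (Polynomial.aeval γ (Polynomial.bernoulli i))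
      = ((Polynomial.aeval γ (Polynomial.bernoulli i) : ℝ) : ℂ) from rfl]
  congr 1
  rw [bernoulliFun, Polynomial.eval_map, Polynomial.aeval_def]

lemma stmt3_conv (γ : ℝ) (n : ℕ) :
    ∑ kl ∈ Finset.HasAntidiagonal.antidiagonal n, stmt3_bb γ kl.1 * stmt3_ee kl.2 = stmt3_dd γ n := by
  have hgen := Polynomial.bernoulli_generating_function ((γ : ℝ) : ℂ)
  have hc := congrArg (PowerSeries.coeff n) hgen
  rw [PowerSeries.coeff_mul] at hc
  simp only [PowerSeries.coeff_mk, map_sub, PowerSeries.coeff_exp, PowerSeries.coeff_one,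
    map_smul, Rat.smul_def, eq_ratCast, Rat.cast_div, Rat.cast_one, Rat.cast_natCast] at hc
  have key : ∑ kl ∈ Finset.HasAntidiagonal.antidiagonal n, stmt3_bb γ kl.1 * stmt3_ee kl.2
      = -(-1:ℂ)^n * ∑ kl ∈ Finset.HasAntidiagonal.antidiagonal n,
          (1 / (kl.1.factorial : ℂ)) * (Polynomial.aeval ((γ:ℝ):ℂ))
            (Polynomial.bernoulli kl.1) *
          ((1 / (kl.2.factorial : ℂ)) - if kl.2 = 0 then 1 else 0) := by
    rw [Finset.mul_sum]
    apply Finset.sum_congr rfl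
    rintro ⟨i, j⟩ hij
    have hn : i + j = n := Finset.HasAntidiagonal.mem_antidiagonal.mp hij
    simp only [stmt3_bb, stmt3_ee, ← stmt3_bernoulliFun_eq]
    rcases eq_or_ne j 0 with rfl | hj
    · simp
    · simp only [hj, if_false, if_neg hj]
      rw [← hn, pow_add, pow_succ]
      ring
  rw [key, hc]
  cases n with
  | zero => simp [stmt3_dd]
  | succ k =>
    rw [PowerSeries.coeff_succ_X_mul, PowerSeries.coeff_rescale, PowerSeries.coeff_exp]
    simp only [stmt3_dd, Nat.succ_ne_zero, if_false, Nat.add_sub_cancel, eq_ratCast,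
      Rat.cast_div, Rat.cast_one, Rat.cast_natCast]
    rw [show (-(γ:ℂ))^k = (-1:ℂ)^k * (γ:ℂ)^k by rw [neg_pow]]
    rw [pow_succ]
    ring

lemma stmt3_exp_hasSum (z : ℂ) :
    HasSum (fun n : ℕ => z ^ n / n.factorial) (Complex.exp z) := by
  rw [Complex.exp_eq_exp_ℂ]
  exact NormedSpace.expSeries_div_hasSum_exp z

lemma stmt3_summable_exp (z : ℂ) : Summable fun n : ℕ => ‖z ^ n / (n.factorial : ℂ)‖ := by
  apply Summable.congr (Real.summable_pow_div_factorial ‖z‖)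
  intro n
  rw [norm_div, norm_pow, Complex.norm_natCast]

lemma stmt3_ee_tsum (y : ℂ) : ∑' n, stmt3_ee n * y ^ n = Complex.exp (-y) - 1 := by
  have h1 : ∀ n : ℕ, stmt3_ee n * y ^ n
      = (-y) ^ n / n.factorial - (if n = 0 then (1:ℂ) else 0) := by
    intro n
    rcases eq_or_ne n 0 with rfl | hn
    · simp [stmt3_ee]
    · rw [stmt3_ee, if_neg hn, if_neg hn, sub_zero, neg_pow]
      ring
  rw [tsum_congr h1, Summable.tsum_sub ((stmt3_summable_exp (-y)).of_norm)
    (hasSum_ite_eq 0 (1:ℂ)).summable, (stmt3_exp_hasSum (-y)).tsum_eq, tsum_ite_eq]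

lemma stmt3_summable_ee (y : ℂ) : Summable fun n => ‖stmt3_ee n * y ^ n‖ := by
  apply Summable.of_nonneg_of_le (fun _ => norm_nonneg _) _ (stmt3_summable_exp y)
  intro n
  rcases eq_or_ne n 0 with rfl | hn
  · simp [stmt3_ee]
  · rw [stmt3_ee, if_neg hn, norm_mul, norm_div, norm_div, norm_pow, norm_pow]
    simp only [Complex.norm_natCast, norm_neg, norm_one, one_pow]
    exact le_of_eq (by ring)

lemma stmt3_summable_bb {γ : ℝ} (hγ0 : 0 ≤ γ) (hγ1 : γ < 1) {y : ℂ} (hy : ‖y‖ ≤ 1) :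
    Summable fun n => ‖stmt3_bb γ n * y ^ n‖ := by
  have hg : Summable (fun n : ℕ => stmt3_K * ((2*π)⁻¹) ^ n) := by
    apply Summable.mul_left
    apply summable_geometric_of_lt_one (by positivity)
    rw [inv_lt_one_iff₀]
    right
    nlinarith [Real.pi_gt_three]
  apply Summable.of_norm_bounded_eventually hg
  rw [Nat.cofinite_eq_atTop]
  filter_upwards [Filter.eventually_ge_atTop 2] with n hn
  rw [norm_norm, norm_mul, norm_pow]
  calc ‖stmt3_bb γ n‖ * ‖y‖ ^ n ≤ (stmt3_K / (2*π)^n) * 1 := by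
        apply mul_le_mul (stmt3_bb_le hγ0 hγ1 hn) (pow_le_one₀ (norm_nonneg _) hy)
          (by positivity)
        exact div_nonneg (tsum_nonneg (fun _ => norm_nonneg _)) (by positivity)
    _ = stmt3_K * ((2*π)⁻¹) ^ n := by rw [mul_one, div_eq_mul_inv, inv_pow]

lemma stmt3_dd_tsum (γ : ℝ) (y : ℂ) :
    ∑' n, stmt3_dd γ n * y ^ n = y * Complex.exp (-(γ:ℂ) * y) := by
  have hfe : (fun n : ℕ => stmt3_dd γ (n+1) * y^(n+1))
      = fun n : ℕ => y * ((-(γ:ℂ)*y)^n / n.factorial) := by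
    funext n
    simp only [stmt3_dd, Nat.succ_ne_zero, if_false, Nat.add_sub_cancel]
    rw [mul_pow, pow_succ]
    ring
  have h : HasSum (fun n : ℕ => stmt3_dd γ (n + 1) * y ^ (n + 1))
      (y * Complex.exp (-(γ:ℂ) * y)) :=
    hfe ▸ (stmt3_exp_hasSum (-(γ:ℂ) * y)).mul_left y
  have h3 := (hasSum_nat_add_iff (f := fun n => stmt3_dd γ n * y ^ n) 1).mp h
  rw [h3.tsum_eq]
  simp [stmt3_dd]

lemma stmt3_BE {γ : ℝ} (hγ0 : 0 ≤ γ) (hγ1 : γ < 1) {y : ℂ} (hy : ‖y‖ ≤ 1) :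
    (∑' n, stmt3_bb γ n * y ^ n) * (Complex.exp (-y) - 1)
      = y * Complex.exp (-(γ:ℂ) * y) := by
  rw [← stmt3_ee_tsum y,
    tsum_mul_tsum_eq_tsum_sum_antidiagonal_of_summable_norm
      (stmt3_summable_bb hγ0 hγ1 hy) (stmt3_summable_ee y),
    ← stmt3_dd_tsum γ y]
  apply tsum_congr
  intro n
  rw [← stmt3_conv γ n, Finset.sum_mul]
  apply Finset.sum_congr rfl
  rintro ⟨i, j⟩ hij
  have hn : i + j = n := Finset.HasAntidiagonal.mem_antidiagonal.mp hij
  rw [← hn, pow_add]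
  ring

lemma stmt3_integral (c : ℕ → ℂ) {r : ℝ} (hr0 : 0 < r) (N : ℕ)
    (hsum : Summable fun n => ‖c n‖ * r ^ n) :
    (∮ y in C(0, r), ∑' n : ℕ, c n * y ^ ((n : ℤ) - (N + 1)))
      = 2 * π * Complex.I * c N := by
  set F : ℕ → ℝ → ℂ := fun n θ =>
    deriv (circleMap 0 r) θ • (c n * (circleMap 0 r θ) ^ ((n : ℤ) - (N + 1))) with hF
  have hcm_ne : ∀ θ : ℝ, circleMap 0 r θ ≠ 0 := fun θ => circleMap_ne_center hr0.ne'
  have hnorm : ∀ n θ, ‖F n θ‖ = (r * r ^ (-(N:ℤ) - 1) ) * (‖c n‖ * r ^ n) := by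
    intro n θ
    rw [hF]
    simp only [deriv_circleMap]
    rw [smul_eq_mul, norm_mul, norm_mul, norm_mul, norm_zpow, Complex.norm_I, mul_one]
    have h1 : ‖circleMap 0 r θ‖ = r := by
      rw [norm_circleMap_zero, abs_of_pos hr0]
    rw [h1]
    rw [show (n:ℤ) - ((N:ℤ)+1) = (n:ℤ) + (-(N:ℤ)-1) by ring, zpow_add₀ hr0.ne',
      zpow_natCast]
    ring
  have hint : ∀ n, MeasureTheory.Integrable (F n)
      (MeasureTheory.volume.restrict (Set.Icc 0 (2*π))) := by
    intro n
    apply Continuous.integrableOn_Icc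
    rw [hF]
    simp only [deriv_circleMap]
    apply Continuous.smul ((continuous_circleMap 0 r).mul continuous_const)
    exact continuous_const.mul ((continuous_circleMap 0 r).zpow₀ _
      (fun θ => Or.inl (hcm_ne θ)))
  have hsummable : Summable fun n => ∫ θ in Set.Icc 0 (2*π), ‖F n θ‖ := by
    apply Summable.congr ((hsum.mul_left ((r * r ^ (-(N:ℤ) - 1)) * (2*π))))
    intro n
    rw [show (fun θ => ‖F n θ‖) = fun _ : ℝ => (r * r ^ (-(N:ℤ)-1)) * (‖c n‖ * r^n) from
      funext fun θ => hnorm n θ]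
    rw [MeasureTheory.setIntegral_const, Real.volume_real_Icc_of_le (by linarith [Real.pi_pos]), smul_eq_mul]
    ring
  have hswap := MeasureTheory.integral_tsum_of_summable_integral_norm hint hsummable
  rw [circleIntegral_def_Icc]
  have hintg : (fun θ : ℝ => deriv (circleMap 0 r) θ •
        ∑' n : ℕ, c n * (circleMap 0 r θ) ^ ((n : ℤ) - (N + 1)))
      = fun θ => ∑' n, F n θ := by
    funext θ
    rw [smul_eq_mul, ← tsum_mul_left]
    rfl
  rw [hintg, ← hswap]
  have heval : ∀ n : ℕ, (∫ θ in Set.Icc 0 (2*π), F n θ)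
      = c n * ∮ y in C(0, r), (y - 0) ^ ((n : ℤ) - (N + 1)) := by
    intro n
    rw [← circleIntegral.integral_const_mul]
    rw [circleIntegral_def_Icc]
    simp only [sub_zero]
    rfl
  rw [tsum_congr heval]
  rw [tsum_eq_single N ?_]
  · rw [show (N:ℤ) - ((N:ℤ)+1) = -1 by ring]
    have : ∀ y : ℂ, (y - 0) ^ (-1 : ℤ) = (y - 0)⁻¹ := fun y => zpow_neg_one _
    rw [circleIntegral.integral_congr hr0.le (fun y _ => this y),
      circleIntegral.integral_sub_inv_of_mem_ball (Metric.mem_ball_self hr0)]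
    ring
  · intro n hn
    rw [circleIntegral.integral_sub_zpow_of_ne, mul_zero]
    intro hcon
    apply hn
    omega

noncomputable def stmt3_cc (P : Polynomial ℂ) (γ : ℝ) (n : ℕ) : ℂ :=
  ∑ kl ∈ Finset.HasAntidiagonal.antidiagonal n, P.coeff kl.1 * stmt3_bb γ kl.2
lemma stmt3_summable_coeff (P : Polynomial ℂ) (y : ℂ) :
    Summable fun n => ‖P.coeff n * y ^ n‖ := by
  apply summable_of_ne_finset_zero (s := Finset.range (P.natDegree + 1))
  intro n hn
  rw [Polynomial.coeff_eq_zero_of_natDegree_lt (by simpa using hn), zero_mul, norm_zero]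

lemma stmt3_P_tsum (P : Polynomial ℂ) (y : ℂ) :
    ∑' n : ℕ, P.coeff n * y ^ n = P.eval y := by
  rw [Polynomial.eval_eq_sum_range]
  apply tsum_eq_sum
  intro n hn
  rw [Polynomial.coeff_eq_zero_of_natDegree_lt (by simpa using hn), zero_mul]

lemma stmt3_norm_twoPiI : ‖2 * (π:ℂ) * Complex.I‖ = 2 * π := by
  simp [norm_mul, Complex.norm_I, Complex.norm_real, abs_of_nonneg Real.pi_pos.le,
    Complex.norm_ofNat]

lemma stmt3_summable_cc (P : Polynomial ℂ) {γ : ℝ} (hγ0 : 0 ≤ γ) (hγ1 : γ < 1)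
    {ρ : ℝ} (hρ0 : 0 ≤ ρ) (hρ1 : ρ ≤ 1) :
    Summable fun n => ‖stmt3_cc P γ n‖ * ρ ^ n := by
  have hρn : ‖((ρ:ℂ))‖ ≤ 1 := by rw [Complex.norm_real, Real.norm_eq_abs, abs_of_nonneg hρ0]; exact hρ1
  have h := summable_norm_sum_mul_antidiagonal_of_summable_norm
    (stmt3_summable_coeff P (ρ:ℂ)) (stmt3_summable_bb hγ0 hγ1 hρn)
  apply Summable.congr h
  intro n
  have h2 : ∑ kl ∈ Finset.HasAntidiagonal.antidiagonal n,
      (P.coeff kl.1 * (ρ:ℂ) ^ kl.1) * (stmt3_bb γ kl.2 * (ρ:ℂ) ^ kl.2)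
      = stmt3_cc P γ n * (ρ:ℂ) ^ n := by
    rw [stmt3_cc, Finset.sum_mul]
    apply Finset.sum_congr rfl
    rintro ⟨i, j⟩ hij
    have hn : i + j = n := Finset.HasAntidiagonal.mem_antidiagonal.mp hij
    rw [← hn, pow_add]
    ring
  rw [h2, norm_mul, norm_pow, Complex.norm_real, Real.norm_eq_abs, abs_of_nonneg hρ0]

lemma stmt3_exp_sub_one_ne (y : ℂ) (hy0 : y ≠ 0) (hy1 : ‖y‖ ≤ 1) :
    Complex.exp (-y) - 1 ≠ 0 := by
  rw [sub_ne_zero]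
  intro h
  rcases Complex.exp_eq_one_iff.mp h with ⟨k, hk⟩
  rcases eq_or_ne k 0 with rfl | hk0
  · simp only [Int.cast_zero, zero_mul] at hk
    exact hy0 (neg_eq_zero.mp hk)
  · have h1 : ‖-y‖ = ‖(k:ℂ)‖ * ‖2*(π:ℂ)*Complex.I‖ := by rw [hk, norm_mul]
    rw [norm_neg, stmt3_norm_twoPiI, Complex.norm_intCast] at h1
    have h2 : (1:ℝ) ≤ |(k:ℝ)| := by exact_mod_cast Int.one_le_abs hk0
    nlinarith [Real.pi_gt_three]

lemma stmt3_integrand_eq (P : Polynomial ℂ) {γ : ℝ} (hγ0 : 0 ≤ γ) (hγ1 : γ < 1)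
    {r : ℝ} (hr0 : 0 < r) (hr1 : r < 1) (N : ℕ) :
    ∀ y ∈ Metric.sphere (0:ℂ) r,
      (P.eval y * Complex.exp (-(γ:ℂ) * y) / y ^ N) / (Complex.exp (-y) - 1)
        = ∑' n : ℕ, stmt3_cc P γ n * y ^ ((n:ℤ) - (N + 1)) := by
  intro y hy
  have hynorm : ‖y‖ = r := by
    rwa [mem_sphere_iff_norm, sub_zero] at hy
  have hy0 : y ≠ 0 := by
    intro h; rw [h, norm_zero] at hynorm; linarith
  have hy1 : ‖y‖ ≤ 1 := by rw [hynorm]; linarith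
  have hexp := stmt3_exp_sub_one_ne y hy0 hy1
  have hBE := stmt3_BE hγ0 hγ1 hy1
  have hexp2 : Complex.exp (-(γ:ℂ) * y)
      = (∑' n, stmt3_bb γ n * y ^ n) * (Complex.exp (-y) - 1) / y := by
    rw [hBE, mul_div_cancel_left₀ _ hy0]
  rw [hexp2]
  have hPB : P.eval y * ∑' n, stmt3_bb γ n * y ^ n = ∑' n, stmt3_cc P γ n * y ^ n := by
    rw [← stmt3_P_tsum P y, tsum_mul_tsum_eq_tsum_sum_antidiagonal_of_summable_norm
      (stmt3_summable_coeff P y) (stmt3_summable_bb hγ0 hγ1 hy1)]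
    apply tsum_congr
    intro n
    rw [stmt3_cc, Finset.sum_mul]
    apply Finset.sum_congr rfl
    rintro ⟨i, j⟩ hij
    have hn : i + j = n := Finset.HasAntidiagonal.mem_antidiagonal.mp hij
    rw [← hn, pow_add]
    ring
  have step1 : P.eval y * ((∑' n, stmt3_bb γ n * y ^ n) * (Complex.exp (-y) - 1) / y)
        / y ^ N / (Complex.exp (-y) - 1)
      = (P.eval y * ∑' n, stmt3_bb γ n * y ^ n) / y ^ (N+1) := by
    field_simp
    ring
  rw [step1, hPB, ← tsum_div_const]
  apply tsum_congr
  intro n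
  rw [mul_div_assoc]
  congr 1
  rw [← zpow_natCast y n, ← zpow_natCast y (N+1), ← zpow_sub₀ hy0]
  congr 1

lemma stmt3_twoPiI_ne : (2 * (π:ℂ) * Complex.I) ≠ 0 := by
  simp [Real.pi_ne_zero, Complex.I_ne_zero, Complex.ofReal_ne_zero]

lemma stmt3_cc_eq (P : Polynomial ℂ) (γ : ℝ) {N : ℕ} (hN : P.natDegree + 2 ≤ N) :
    stmt3_cc P γ N = ∑ k ∈ Finset.range (P.natDegree + 1),
      P.coeff k * stmt3_bb γ (N - k) := by
  rw [stmt3_cc, Finset.Nat.sum_antidiagonal_eq_sum_range_succ_mk]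
  refine (Finset.sum_subset ?_ ?_).symm
  · apply Finset.range_subset_range.mpr
    omega
  · intro k _ hk
    rw [Polynomial.coeff_eq_zero_of_natDegree_lt (by simpa using hk), zero_mul]

lemma stmt3_lhs (P : Polynomial ℂ) (N : ℕ) (hN : P.natDegree + 2 ≤ N)
    {γ : ℝ} (hγ0 : 0 ≤ γ) (hγ1 : γ < 1) :
    HasSum
      (fun l : {l : ℤ // l ≠ 0} =>
        P.eval (2 * (π : ℂ) * Complex.I * (l.1 : ℂ))
          * Complex.exp (-(γ : ℂ) * (2 * (π : ℂ) * Complex.I * (l.1 : ℂ)))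
          / (2 * (π : ℂ) * Complex.I * (l.1 : ℂ)) ^ N)
      (stmt3_cc P γ N) := by
  rw [stmt3_cc_eq P γ hN]
  have hterm : ∀ k ∈ Finset.range (P.natDegree + 1),
      HasSum (fun l : {l : ℤ // l ≠ 0} =>
        P.coeff k * (2 * (π : ℂ) * Complex.I * (l.1 : ℂ)) ^ k
          * Complex.exp (-(γ : ℂ) * (2 * (π : ℂ) * Complex.I * (l.1 : ℂ)))
          / (2 * (π : ℂ) * Complex.I * (l.1 : ℂ)) ^ N)
        (P.coeff k * stmt3_bb γ (N - k)) := by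
    intro k hk
    have hkd : k ≤ P.natDegree := by simpa [Nat.lt_succ_iff] using hk
    have hk2 : 2 ≤ N - k := by omega
    have h1 := stmt3_hurwitz hγ0 hγ1 hk2
    have hsupp : Function.support (fun l : ℤ => 1 / (l : ℂ) ^ (N-k) *
        Complex.exp (-(γ : ℂ) * (2 * (π : ℂ) * Complex.I * (l : ℂ))))
        ⊆ {l : ℤ | l ≠ 0} := by
      intro l hl
      simp only [Function.mem_support] at hl
      intro h0
      apply hl
      rw [h0]
      simp [zero_pow (by omega : N - k ≠ 0)]
    have h2 : HasSum ((fun l : ℤ => 1 / (l : ℂ) ^ (N-k) *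
        Complex.exp (-(γ : ℂ) * (2 * (π : ℂ) * Complex.I * (l : ℂ))))
          ∘ (Subtype.val : {l : ℤ // l ≠ 0} → ℤ))
        ((2 * (π : ℂ) * Complex.I) ^ (N-k) * stmt3_bb γ (N - k)) :=
      (hasSum_subtype_iff_of_support_subset hsupp).mpr h1
    have h3 := h2.mul_left (P.coeff k * ((2 * (π : ℂ) * Complex.I) ^ (N-k))⁻¹)
    convert h3 using 1
    · rfl
    · funext l
      have hl0 : (l.1 : ℂ) ≠ 0 := Int.cast_ne_zero.mpr l.2
      have hw : (2 * (π : ℂ) * Complex.I * (l.1 : ℂ)) ≠ 0 :=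
        mul_ne_zero stmt3_twoPiI_ne hl0
      simp only [Function.comp_apply]
      obtain ⟨j, hjk, hjN⟩ : ∃ j, N - k = j ∧ N = k + j := ⟨N - k, rfl, by omega⟩
      rw [hjk, hjN]
      rw [show (2 * (π:ℂ) * Complex.I * (l.1:ℂ)) ^ (k+j)
          = (2 * (π:ℂ) * Complex.I * (l.1:ℂ)) ^ k * ((2 * (π:ℂ) * Complex.I) ^ j * (l.1:ℂ) ^ j)
          by rw [pow_add, mul_pow (2*(π:ℂ)*Complex.I) ((l.1:ℂ)) j]]
      have h2πj : ((2 * (π:ℂ) * Complex.I) ^ j) ≠ 0 := pow_ne_zero _ stmt3_twoPiI_ne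
      have hlj : ((l.1:ℂ) ^ j) ≠ 0 := pow_ne_zero _ hl0
      field_simp
    · rw [mul_assoc, inv_mul_cancel_left₀ (pow_ne_zero _ stmt3_twoPiI_ne)]
  have h := hasSum_sum hterm
  convert h using 1
  funext l
  rw [Polynomial.eval_eq_sum_range, Finset.sum_mul, Finset.sum_div]

/-- Let `g(Y) = P(Y)/Y^N` be a rational function whose only pole is at `0` and which is
`O(|Y|⁻²)` at infinity (i.e. `deg P + 2 ≤ N`), let `0 ≤ γ < 1` and `f(Y) = g(Y) e^(-γY)`.
Then `Σ_{l ∈ ℤ, l ≠ 0} f(2πil)` converges and equals `Res_{Y=0} (f(Y)/(e^(-Y)-1))`, the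
residue being expressed as `(2πi)⁻¹` times the integral over a circle of radius `0 < r < 1`
about `0` (which encloses no other pole of the integrand). -/
theorem stmt_3 (P : Polynomial ℂ) (N : ℕ) (hN : P.natDegree + 2 ≤ N)
    (γ : ℝ) (hγ0 : 0 ≤ γ) (hγ1 : γ < 1) (r : ℝ) (hr0 : 0 < r) (hr1 : r < 1) :
    HasSum
      (fun l : {l : ℤ // l ≠ 0} =>
        P.eval (2 * (π : ℂ) * Complex.I * (l.1 : ℂ))
          * Complex.exp (-(γ : ℂ) * (2 * (π : ℂ) * Complex.I * (l.1 : ℂ)))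
          / (2 * (π : ℂ) * Complex.I * (l.1 : ℂ)) ^ N)
      ((2 * (π : ℂ) * Complex.I)⁻¹ *
        ∮ y in C(0, r),
          (P.eval y * Complex.exp (-(γ : ℂ) * y) / y ^ N) / (Complex.exp (-y) - 1)) := by
  have hint : (∮ y in C(0, r),
        (P.eval y * Complex.exp (-(γ : ℂ) * y) / y ^ N) / (Complex.exp (-y) - 1))
      = 2 * π * Complex.I * stmt3_cc P γ N := by
    rw [circleIntegral.integral_congr hr0.le
      (fun y hy => stmt3_integrand_eq P hγ0 hγ1 hr0 hr1 N y hy)]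
    exact stmt3_integral _ hr0 N (stmt3_summable_cc P hγ0 hγ1 hr0.le hr1.le)
  rw [hint, inv_mul_cancel_left₀ stmt3_twoPiI_ne]
  exact stmt3_lhs P N hN hγ0 hγ1
end

section
/- Let n ≥ 2 and g ≥ 1, and let c = diag(c_1, …, c_n) ∈ SU(n) be a diagonal matrix such that no product of a proper nonempty subset of {c_1, …, c_n} equals 1. Suppose h_1, …, h_{2g} ∈ SU(n) satisfy ∏_{j=1}^{g} [h_{2j-1}, h_{2j}] = c, where [a,b] = a b a^{-1} b^{-1}. If a diagonal matrix t = diag(t_1, …, t_n) ∈ SU(n) commutes with every h_j, then t is a scalar matrix, i.e. t_1 = t_2 = … = t_n. -/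
/-- Let `c = diag(c_1,…,c_n) ∈ SU(n)` with no product over a proper nonempty subset of the
`c_i` equal to `1`, and let `h_1, …, h_{2g} ∈ SU(n)` satisfy `∏_{j=1}^g [h_{2j-1}, h_{2j}] = c`.
If a diagonal matrix `t = diag(t_1,…,t_n) ∈ SU(n)` commutes with every `h_j`, then `t` is a
scalar matrix. -/
theorem stmt_6 (n g : ℕ) (hn : 2 ≤ n) (hg : 1 ≤ g)
    (c t : Fin n → ℂ)
    (hcnorm : ∀ i, ‖c i‖ = 1) (hcdet : ∏ i, c i = 1)
    (htnorm : ∀ i, ‖t i‖ = 1) (htdet : ∏ i, t i = 1)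
    (hsub : ∀ S : Finset (Fin n), S.Nonempty → S ≠ Finset.univ → ∏ i ∈ S, c i ≠ 1)
    (h : ℕ → Matrix (Fin n) (Fin n) ℂ)
    (hunit : ∀ j, j < 2 * g → h j * (h j).conjTranspose = 1)
    (hdet : ∀ j, j < 2 * g → (h j).det = 1)
    (hprod : ((List.range g).map fun j =>
        h (2 * j) * h (2 * j + 1) * (h (2 * j))⁻¹ * (h (2 * j + 1))⁻¹).prod
      = Matrix.diagonal c)
    (hcomm : ∀ j, j < 2 * g → Matrix.diagonal t * h j = h j * Matrix.diagonal t) :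
    ∀ i j : Fin n, t i = t j := by
  classical
  intro i0 j0
  by_contra hne
  set p : Fin n → Prop := fun i => t i = t i0 with hp
  -- product of block matrices is block
  have hBmul : ∀ M N : Matrix (Fin n) (Fin n) ℂ,
      (∀ a b, t a ≠ t b → M a b = 0) → (∀ a b, t a ≠ t b → N a b = 0) →
      (∀ a b, t a ≠ t b → (M * N) a b = 0) := by
    intro M N hM hN a b hab
    rw [Matrix.mul_apply]
    apply Finset.sum_eq_zero
    intro x _
    by_cases hx : t a = t x
    · rw [hN x b (fun hh => hab (hx.trans hh)), mul_zero]
    · rw [hM a x hx, zero_mul]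
  -- toBlock of product of block matrices
  have hTB : ∀ M N : Matrix (Fin n) (Fin n) ℂ,
      (∀ a b, t a ≠ t b → M a b = 0) →
      (M * N).toBlock p p = M.toBlock p p * N.toBlock p p := by
    intro M N hM
    rw [Matrix.toBlock_mul_eq_add p p p M N]
    have hz : (M.toBlock p fun i => ¬ p i) = 0 := by
      ext a b
      exact hM a b (fun hh => b.2 (hh.symm.trans a.2))
    rw [hz, Matrix.zero_mul, add_zero]
  have hone : ((1 : Matrix (Fin n) (Fin n) ℂ).toBlock p p) = 1 := by
    rw [← Matrix.diagonal_one, Matrix.toBlock_diagonal_self, Matrix.diagonal_one]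
  -- inverse = conjTranspose
  have hinv : ∀ j, j < 2 * g → (h j)⁻¹ = (h j).conjTranspose := fun j hj =>
    Matrix.inv_eq_right_inv (hunit j hj)
  -- blockness of h j
  have hblk : ∀ j, j < 2 * g → ∀ a b, t a ≠ t b → h j a b = 0 := by
    intro j hj a b hab
    have := congrFun (congrFun (hcomm j hj) a) b
    rw [Matrix.diagonal_mul, Matrix.mul_diagonal] at this
    have h2 : (t a - t b) * h j a b = 0 := by linear_combination this
    rcases mul_eq_zero.mp h2 with h3 | h3
    · exact absurd (sub_eq_zero.mp h3) hab
    · exact h3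
  have hblkT : ∀ j, j < 2 * g → ∀ a b, t a ≠ t b → (h j).conjTranspose a b = 0 := by
    intro j hj a b hab
    rw [Matrix.conjTranspose_apply, hblk j hj b a (Ne.symm hab), star_zero]
  -- each commutator is block with S-block determinant 1
  have hcomm1 : ∀ M ∈ (List.range g).map fun j =>
        h (2 * j) * h (2 * j + 1) * (h (2 * j))⁻¹ * (h (2 * j + 1))⁻¹,
      (∀ a b, t a ≠ t b → M a b = 0) ∧ (M.toBlock p p).det = 1 := by
    intro M hM
    obtain ⟨j, hj, rfl⟩ := List.mem_map.mp hM
    have hj' : j < g := List.mem_range.mp hj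
    have h1 : 2 * j < 2 * g := by omega
    have h2 : 2 * j + 1 < 2 * g := by omega
    set A := h (2 * j)
    set B := h (2 * j + 1)
    rw [hinv _ h1, hinv _ h2]
    have bA := hblk _ h1
    have bB := hblk _ h2
    have bA' := hblkT _ h1
    have bB' := hblkT _ h2
    have bAB := hBmul _ _ bA bB
    have bABA := hBmul _ _ bAB bA'
    constructor
    · exact hBmul _ _ bABA bB'
    · have e1 : ((A * B * A.conjTranspose * B.conjTranspose).toBlock p p)
          = A.toBlock p p * B.toBlock p p * (A.conjTranspose).toBlock p p
            * (B.conjTranspose).toBlock p p := by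
        rw [hTB _ _ bABA, hTB _ _ bAB, hTB _ _ bA]
      have eA : (A.toBlock p p).det * ((A.conjTranspose).toBlock p p).det = 1 := by
        rw [← Matrix.det_mul, ← hTB _ _ bA, hunit _ h1, hone, Matrix.det_one]
      have eB : (B.toBlock p p).det * ((B.conjTranspose).toBlock p p).det = 1 := by
        rw [← Matrix.det_mul, ← hTB _ _ bB, hunit _ h2, hone, Matrix.det_one]
      rw [e1, Matrix.det_mul, Matrix.det_mul, Matrix.det_mul]
      calc (A.toBlock p p).det * (B.toBlock p p).det * ((A.conjTranspose).toBlock p p).det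
            * ((B.conjTranspose).toBlock p p).det
          = ((A.toBlock p p).det * ((A.conjTranspose).toBlock p p).det)
            * ((B.toBlock p p).det * ((B.conjTranspose).toBlock p p).det) := by ring
        _ = 1 := by rw [eA, eB, one_mul]
  -- product of block matrices with det-1 blocks
  have key : ∀ L : List (Matrix (Fin n) (Fin n) ℂ),
      (∀ M ∈ L, (∀ a b, t a ≠ t b → M a b = 0) ∧ (M.toBlock p p).det = 1) →
      (∀ a b, t a ≠ t b → L.prod a b = 0) ∧ (L.prod.toBlock p p).det = 1 := by
    intro L
    induction L with
    | nil =>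
      intro _
      constructor
      · intro a b hab
        rw [List.prod_nil]
        exact Matrix.one_apply_ne (fun hh => hab (by rw [hh]))
      · rw [List.prod_nil, hone, Matrix.det_one]
    | cons M L ih =>
      intro hall
      obtain ⟨hM1, hM2⟩ := hall M List.mem_cons_self
      obtain ⟨hL1, hL2⟩ := ih (fun N hN => hall N (List.mem_cons_of_mem M hN))
      rw [List.prod_cons]
      exact ⟨hBmul _ _ hM1 hL1, by rw [hTB _ _ hM1, Matrix.det_mul, hM2, hL2, one_mul]⟩
  obtain ⟨-, hdet1⟩ := key _ hcomm1
  rw [hprod, Matrix.toBlock_diagonal_self, Matrix.det_diagonal] at hdet1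
  have hfin : ∏ i ∈ Finset.univ.filter p, c i = 1 := by
    rw [← hdet1]
    exact Finset.prod_subtype _ (fun x => by simp) c
  refine hsub (Finset.univ.filter p) ⟨i0, by simp [hp]⟩ ?_ hfin
  intro hU
  have : j0 ∈ Finset.univ.filter p := by rw [hU]; exact Finset.mem_univ j0
  exact hne ((Finset.mem_filter.mp this).2.symm)
end

section
/- Let n ≥ 2 and 1 ≤ r ≤ n-1. Let T_r ⊂ SU(r), T_{n-r} ⊂ SU(n-r), and T_n ⊂ SU(n) be the diagonal maximal tori. Define φ : U(1) × T_r × T_{n-r} → T_n by φ(s, t, u) = diag(s^{n-r} t, s^{-r} u) (block diagonal with first block the r×r matrix s^{n-r} t and second block the (n-r)×(n-r) matrix s^{-r} u). Then φ is a surjective group homomorphism whose kernel has exactly r(n-r) elements. -/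
/-- The maximal torus `T_m ⊂ SU(m)`: tuples of unit complex numbers with product `1`,
realized as a subgroup of `Fin m → Circle`. -/
noncomputable def Torus (m : ℕ) : Subgroup (Fin m → Circle) where
  carrier := {t | ∏ i, t i = 1}
  mul_mem' := by
    intro a b ha hb
    simp only [Set.mem_setOf_eq] at *
    simp [Pi.mul_apply, Finset.prod_mul_distrib, ha, hb]
  one_mem' := by simp
  inv_mem' := by
    intro a ha
    simp only [Set.mem_setOf_eq] at *
    rw [show (∏ i, a⁻¹ i) = (∏ i, a i)⁻¹ by simp [Finset.prod_inv_distrib], ha]; simp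

/-- Splitting a product over `Fin n` at position `r`. -/
lemma prod_split {n r : ℕ} (hrn : r ≤ n) (v : Fin n → Circle) :
    ∏ i, v i = (∏ i : Fin r, v (Fin.castLE hrn i)) *
      ∏ j : Fin (n - r), v ⟨r + j.val, by have := j.isLt; omega⟩ := by
  have e : r + (n - r) = n := by omega
  rw [show (∏ i, v i) = ∏ i : Fin (r + (n - r)), v (Fin.cast e i) from
    (Fintype.prod_equiv (finCongr e) _ _ (fun i => rfl)).symm]
  rw [Fin.prod_univ_add]
  rfl

/-- Underlying function of the homomorphism `φ`. -/
noncomputable def phiFun (n r : ℕ) (p : Circle × Torus r × Torus (n - r)) :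
    Fin n → Circle := fun i =>
  if h : i.val < r then p.1 ^ (n - r) * (p.2.1 : Fin r → Circle) ⟨i.val, h⟩
  else p.1 ^ (-(r : ℤ)) *
    (p.2.2 : Fin (n - r) → Circle) ⟨i.val - r, Nat.sub_lt_sub_right (Nat.not_lt.mp h) i.isLt⟩

lemma phiFun_mem (n r : ℕ) (hrn : r ≤ n) (p : Circle × Torus r × Torus (n - r)) :
    phiFun n r p ∈ Torus n := by
  obtain ⟨s, t, u⟩ := p
  show (∏ i, phiFun n r (s, t, u) i) = 1
  rw [prod_split hrn]
  have h1 : ∀ i : Fin r, phiFun n r (s, t, u) (Fin.castLE hrn i)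
      = s ^ (n - r) * (t : Fin r → Circle) i := by
    intro i
    simp only [phiFun, Fin.coe_castLE, i.isLt, dif_pos, Fin.eta]
  have h2 : ∀ j : Fin (n - r), phiFun n r (s, t, u) ⟨r + j.val, by have := j.isLt; omega⟩
      = s ^ (-(r : ℤ)) * (u : Fin (n - r) → Circle) j := by
    intro j
    have hj : ¬ (r + j.val < r) := by omega
    have heq : (⟨r + j.val - r, by have := j.isLt; omega⟩ : Fin (n - r)) = j :=
      Fin.ext (show r + j.val - r = j.val by omega)
    simp only [phiFun]
    rw [dif_neg hj, heq]
  simp only [Finset.prod_congr rfl (fun i _ => h1 i),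
    Finset.prod_congr rfl (fun j _ => h2 j)]
  rw [Finset.prod_mul_distrib, Finset.prod_mul_distrib, Finset.prod_const,
    Finset.prod_const, t.2, u.2, Finset.card_univ, Fintype.card_fin,
    mul_one, mul_one]
  simp only [Finset.card_univ, Fintype.card_fin]
  rw [← zpow_natCast s (n - r), ← zpow_natCast (s ^ ((n - r : ℕ) : ℤ)) r,
    ← zpow_natCast (s ^ (-(r : ℤ))) (n - r), ← zpow_mul, ← zpow_mul, ← zpow_add]
  rw [show ((n - r : ℕ) : ℤ) * r + (-(r : ℤ)) * ((n - r : ℕ) : ℤ) = 0 by ring]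
  exact zpow_zero s

/-- The homomorphism `φ`. -/
noncomputable def phi (n r : ℕ) (hrn : r ≤ n) :
    (Circle × Torus r × Torus (n - r)) →* Torus n where
  toFun p := ⟨phiFun n r p, phiFun_mem n r hrn p⟩
  map_one' := by
    apply Subtype.ext
    funext i
    simp only [phiFun]
    split <;> simp
  map_mul' p q := by
    apply Subtype.ext
    funext i
    simp only [phiFun, Subgroup.coe_mul, Pi.mul_apply, Prod.fst_mul, Prod.snd_mul,
      Submonoid.coe_mul]
    split
    · rw [mul_pow]; exact mul_mul_mul_comm _ _ _ _
    · rw [mul_zpow]; exact mul_mul_mul_comm _ _ _ _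

lemma Circle.exp_nat_mul' (x : ℝ) (m : ℕ) : Circle.exp x ^ m = Circle.exp (m * x) := by
  induction m with
  | zero => simp
  | succ m ih =>
    rw [pow_succ, ih, ← Circle.exp_add]
    push_cast
    ring_nf

lemma Circle.exp_arg' (z : Circle) : Circle.exp (Complex.arg z) = z := by
  apply Subtype.ext
  rw [Circle.coe_exp]
  have := Complex.norm_mul_exp_arg_mul_I (z : ℂ)
  rwa [Circle.norm_coe, Complex.ofReal_one, one_mul] at this

/-- Every element of the circle has a `k`-th root, `k ≠ 0`. -/
lemma circle_root (k : ℕ) (hk : k ≠ 0) (P : Circle) : ∃ s : Circle, s ^ k = P := by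
  refine ⟨Circle.exp (Complex.arg P / k), ?_⟩
  rw [Circle.exp_nat_mul', mul_div_cancel₀, Circle.exp_arg']
  exact_mod_cast hk

/-- The map `φ(s, t, u) = diag(s^(n-r) t, s^(-r) u)` is a surjective group homomorphism
`U(1) × T_r × T_{n-r} → T_n` whose kernel has exactly `r(n-r)` elements. -/
theorem stmt_14 (n r : ℕ) (hn : 2 ≤ n) (hr1 : 1 ≤ r) (hr2 : r ≤ n - 1) :
    ∃ φ : (Circle × Torus r × Torus (n - r)) →* Torus n,
      (∀ (s : Circle) (t : Torus r) (u : Torus (n - r)) (i : Fin n),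
        (φ (s, t, u) : Fin n → Circle) i =
          if h : i.val < r then s ^ (n - r) * (t : Fin r → Circle) ⟨i.val, h⟩
          else s ^ (-(r : ℤ)) *
            (u : Fin (n - r) → Circle) ⟨i.val - r, by have := i.isLt; omega⟩) ∧
      Function.Surjective φ ∧ Nat.card (MonoidHom.ker φ) = r * (n - r) := by
  have hrn : r ≤ n := by omega
  have hm : 1 ≤ n - r := by omega
  set k := r * (n - r) with hk
  have hk0 : k ≠ 0 := by positivity
  refine ⟨phi n r hrn, fun s t u i => rfl, ?_, ?_⟩
  · -- surjectivity
    rintro ⟨v, hv⟩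
    have hv' : ∏ i, v i = 1 := hv
    set P : Circle := ∏ i : Fin r, v (Fin.castLE hrn i) with hP
    set Q : Circle := ∏ j : Fin (n - r), v ⟨r + j.val, by have := j.isLt; omega⟩ with hQ
    have hPQ : P * Q = 1 := by rw [hP, hQ, ← prod_split hrn, hv']
    obtain ⟨s, hs⟩ := circle_root ((n - r) * r) (by positivity) P
    refine ⟨⟨s, ⟨fun i => (s ^ (n - r))⁻¹ * v (Fin.castLE hrn i), ?_⟩,
      ⟨fun j => (s ^ (-(r : ℤ)))⁻¹ * v ⟨r + j.val, by have := j.isLt; omega⟩, ?_⟩⟩, ?_⟩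
    · show (∏ i : Fin r, _) = 1
      rw [Finset.prod_mul_distrib, Finset.prod_const, Finset.card_univ,
        Fintype.card_fin, ← hP, inv_pow, ← pow_mul, hs]
      exact inv_mul_cancel P
    · show (∏ j : Fin (n - r), _) = 1
      rw [Finset.prod_mul_distrib, Finset.prod_const, Finset.card_univ,
        Fintype.card_fin, ← hQ]
      have : ((s ^ (-(r : ℤ)))⁻¹) ^ (n - r) = P := by
        rw [← zpow_neg, neg_neg, ← zpow_natCast (s ^ ((r : ℤ))) (n - r), ← zpow_mul,
          show (r : ℤ) * ((n - r : ℕ) : ℤ) = (((n - r) * r : ℕ) : ℤ) by push_cast; ring,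
          zpow_natCast, hs]
      rw [this, hPQ]
    · apply Subtype.ext
      funext i
      show phiFun n r _ i = v i
      simp only [phiFun]
      split
      · next h =>
        rw [mul_inv_cancel_left]
        exact congrArg v (Fin.ext rfl)
      · next h =>
        rw [mul_inv_cancel_left]
        exact congrArg v (Fin.ext (by simp; omega))
  · -- kernel cardinality
    have key : ∀ p : Circle × Torus r × Torus (n - r), p ∈ MonoidHom.ker (phi n r hrn) →
        (∀ i : Fin r, (p.2.1 : Fin r → Circle) i = (p.1 ^ (n - r))⁻¹) ∧
        (∀ j : Fin (n - r), (p.2.2 : Fin (n - r) → Circle) j = p.1 ^ r) ∧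
        p.1 ^ k = 1 := by
      rintro ⟨s, t, u⟩ hp
      have hp' : ∀ i : Fin n, phiFun n r (s, t, u) i = 1 :=
        fun i => congrFun (congrArg (Subtype.val) hp) i
      have ht : ∀ i : Fin r, (t : Fin r → Circle) i = (s ^ (n - r))⁻¹ := by
        intro i
        have h := hp' (Fin.castLE hrn i)
        simp only [phiFun, Fin.coe_castLE, i.isLt, dif_pos, Fin.eta] at h
        exact (inv_eq_of_mul_eq_one_right h).symm
      have hu : ∀ j : Fin (n - r), (u : Fin (n - r) → Circle) j = s ^ r := by
        intro j
        have h := hp' ⟨r + j.val, by have := j.isLt; omega⟩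
        have hj : ¬ (r + j.val < r) := by omega
        have heq : (⟨r + j.val - r, by have := j.isLt; omega⟩ : Fin (n - r)) = j :=
          Fin.ext (show r + j.val - r = j.val by omega)
        simp only [phiFun] at h
        rw [dif_neg hj, heq] at h
        have h' := (inv_eq_of_mul_eq_one_right h).symm
        rw [h', ← zpow_neg, neg_neg, zpow_natCast]
      have hs : s ^ k = 1 := by
        have ht' : (∏ i, (t : Fin r → Circle) i) = 1 := t.2
        rw [Finset.prod_congr rfl (fun i _ => ht i), Finset.prod_const,
          Finset.card_univ, Fintype.card_fin, inv_pow, ← pow_mul, inv_eq_one,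
          Nat.mul_comm] at ht'
        exact ht'
      exact ⟨ht, hu, hs⟩
    let F : MonoidHom.ker (phi n r hrn) → {z : ℂ // z ^ k = 1} := fun p =>
      ⟨(p.1.1 : ℂ), by
        have hs := (key p.1 p.2).2.2
        calc ((p.1.1 : ℂ)) ^ k = ((p.1.1 ^ k : Circle) : ℂ) := by norm_cast
          _ = 1 := by rw [hs]; rfl⟩
    have hFinj : Function.Injective F := by
      rintro ⟨⟨s1, t1, u1⟩, h1⟩ ⟨⟨s2, t2, u2⟩, h2⟩ h
      have hval := congrArg Subtype.val h
      simp only [F] at hval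
      have hs : s1 = s2 := Circle.ext hval
      subst hs
      have ht : t1 = t2 := by
        apply Subtype.ext
        funext i
        rw [(key _ h1).1 i, (key _ h2).1 i]
      have hu : u1 = u2 := by
        apply Subtype.ext
        funext j
        rw [(key _ h1).2.1 j, (key _ h2).2.1 j]
      subst ht; subst hu; rfl
    have hFsurj : Function.Surjective F := by
      rintro ⟨z, hz⟩
      have habs : ‖z‖ = 1 := by
        have h1 : ‖z‖ ^ k = 1 := by rw [← norm_pow, hz, norm_one]
        rcases lt_trichotomy ‖z‖ 1 with h | h | h
        · have := pow_lt_one₀ (norm_nonneg z) h hk0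
          linarith
        · exact h
        · have := one_lt_pow₀ h hk0
          linarith
      have hmem : z ∈ Submonoid.unitSphere ℂ := mem_sphere_zero_iff_norm.mpr habs
      set s0 : Circle := ⟨z, hmem⟩ with hs0
      have hs0k : s0 ^ k = 1 := by
        apply Circle.ext
        push_cast
        exact hz
      have htmem : (fun _ : Fin r => (s0 ^ (n - r))⁻¹) ∈ Torus r := by
        show (∏ _i : Fin r, (s0 ^ (n - r))⁻¹) = 1
        rw [Finset.prod_const, Finset.card_univ, Fintype.card_fin, inv_pow,
          ← pow_mul, inv_eq_one, Nat.mul_comm, hs0k]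
      have humem : (fun _ : Fin (n - r) => s0 ^ r) ∈ Torus (n - r) := by
        show (∏ _j : Fin (n - r), s0 ^ r) = 1
        rw [Finset.prod_const, Finset.card_univ, Fintype.card_fin,
          ← pow_mul, hs0k]
      refine ⟨⟨⟨s0, ⟨_, htmem⟩, ⟨_, humem⟩⟩, ?_⟩, Subtype.ext rfl⟩
      show phi n r hrn _ = 1
      apply Subtype.ext
      funext i
      simp only [phi, MonoidHom.coe_mk, OneHom.coe_mk, phiFun]
      split
      · exact mul_inv_cancel _
      · show s0 ^ (-(r : ℤ)) * s0 ^ r = _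
        rw [← zpow_natCast s0 r, ← zpow_add, neg_add_cancel, zpow_zero]
        rfl
    rw [Nat.card_congr (Equiv.ofBijective F ⟨hFinj, hFsurj⟩)]
    have hset : {z : ℂ | z ^ k = 1} = ↑(Polynomial.nthRootsFinset k (1 : ℂ)) := by
      ext z
      rw [Finset.mem_coe, Polynomial.mem_nthRootsFinset (Nat.pos_of_ne_zero hk0)]
      rfl
    calc Nat.card {z : ℂ // z ^ k = 1} = ({z : ℂ | z ^ k = 1}).ncard :=
          Nat.card_coe_set_eq _
      _ = (Polynomial.nthRootsFinset k (1 : ℂ)).card := by rw [hset, Set.ncard_coe_finset]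
      _ = k := (Complex.isPrimitiveRoot_exp k hk0).card_nthRootsFinset
end
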